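/- arXiv:1607.02096 — 3 statements merged into one kernel-verified Lean document; each statement's English description precedes it below -/
import Mathlib

section
/- Let A be an n×n real symmetric matrix and let X₁ ∈ ℝ^{n×ρ} and X₂ ∈ ℝ^{n×(n−ρ)} be matrices such that the block matrix [X₁ X₂] is orthogonal and X₁ᵀAX₂ = 0 (so that, writing L₁ = X₁ᵀAX₁ and L₂ = X₂ᵀAX₂, the pair gives a spectral resolution [X₁ X₂]ᵀ A [X₁ X₂] = diag(L₁, L₂)). Let Z ∈ ℝ^{n×ρ} have orthonormal columns (ZᵀZ = I_ρ), let M be a ρ×ρ real symmetric matrix, and define the residual R = AZ − ZM. Suppose there exist reals α ≤ β and δ > 0 such that every eigenvalue of M lies in the interval [α, β] and every eigenvalue of L₂ lies in ℝ \ [α − δ, β + δ]. Then ‖X₂ᵀZ‖_F ≤ ‖R‖_F / δ. -/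
open Matrix

namespace DKAux

/-- squared Frobenius norm -/
noncomputable def f2 {m n : Type*} [Fintype m] [Fintype n] (M : Matrix m n ℝ) : ℝ :=
  ∑ x, ∑ y, (M x y) ^ 2

lemma f2_nonneg {m n : Type*} [Fintype m] [Fintype n] (M : Matrix m n ℝ) : 0 ≤ f2 M := by
  apply Finset.sum_nonneg; intro x _; apply Finset.sum_nonneg; intro y _; positivity

lemma f2_eq_trace {m n : Type*} [Fintype m] [Fintype n] (M : Matrix m n ℝ) :
    f2 M = Matrix.trace (Mᵀ * M) := by
  rw [f2, Finset.sum_comm]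
  simp [Matrix.trace, Matrix.diag, Matrix.mul_apply, sq]

lemma f2_mul_left {k m n : Type*} [Fintype k] [Fintype m] [Fintype n] [DecidableEq m]
    (Q : Matrix k m ℝ) (hQ : Qᵀ * Q = 1) (M : Matrix m n ℝ) : f2 (Q * M) = f2 M := by
  rw [f2_eq_trace, f2_eq_trace, Matrix.transpose_mul]
  rw [show Mᵀ * Qᵀ * (Q * M) = Mᵀ * (Qᵀ * Q) * M by simp [Matrix.mul_assoc], hQ, Matrix.mul_one]

lemma f2_mul_right {k m n : Type*} [Fintype k] [Fintype m] [Fintype n] [DecidableEq n]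
    (M : Matrix m n ℝ) (V : Matrix n k ℝ) (hV : V * Vᵀ = 1) : f2 (M * V) = f2 M := by
  rw [f2_eq_trace, f2_eq_trace, Matrix.transpose_mul]
  rw [show Vᵀ * Mᵀ * (M * V) = Vᵀ * (Mᵀ * (M * V)) by simp [Matrix.mul_assoc],
    Matrix.trace_mul_comm, show Mᵀ * (M * V) * Vᵀ = Mᵀ * M * (V * Vᵀ) by simp [Matrix.mul_assoc],
    hV, Matrix.mul_one]

end DKAux

open DKAux

/-- The Frobenius norm of a real matrix. -/
noncomputable def frobNorm {m n : ℕ} (M : Matrix (Fin m) (Fin n) ℝ) : ℝ :=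
  Real.sqrt (∑ x, ∑ y, (M x y) ^ 2)

lemma frobNorm_eq {m n : ℕ} (M : Matrix (Fin m) (Fin n) ℝ) : frobNorm M = Real.sqrt (f2 M) := rfl

set_option maxHeartbeats 2000000 in
/-- Davis–Kahan sinΘ theorem, Frobenius-norm case. -/
theorem davis_kahan_sin_theta_frobenius
    (n ρ : ℕ)
    (A : Matrix (Fin n) (Fin n) ℝ) (hA : A.IsSymm)
    (X₁ : Matrix (Fin n) (Fin ρ) ℝ) (X₂ : Matrix (Fin n) (Fin (n - ρ)) ℝ)
    (hX₁ : X₁ᵀ * X₁ = 1) (hX₂ : X₂ᵀ * X₂ = 1) (hX₁₂ : X₁ᵀ * X₂ = 0)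
    (hcomplete : X₁ * X₁ᵀ + X₂ * X₂ᵀ = 1)
    (hblock : X₁ᵀ * A * X₂ = 0)
    (Z : Matrix (Fin n) (Fin ρ) ℝ) (hZ : Zᵀ * Z = 1)
    (M : Matrix (Fin ρ) (Fin ρ) ℝ) (hM : M.IsSymm)
    (R : Matrix (Fin n) (Fin ρ) ℝ) (hR : R = A * Z - Z * M)
    (α β δ : ℝ) (hαβ : α ≤ β) (hδ : 0 < δ)
    (hMspec : spectrum ℝ M ⊆ Set.Icc α β)
    (hL₂spec : ∀ μ ∈ spectrum ℝ (X₂ᵀ * A * X₂), μ ∉ Set.Icc (α - δ) (β + δ)) :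
    frobNorm (X₂ᵀ * Z) ≤ frobNorm R / δ := by
  classical
  set L₂ : Matrix (Fin (n-ρ)) (Fin (n-ρ)) ℝ := X₂ᵀ * A * X₂ with hL₂def
  set S : Matrix (Fin (n-ρ)) (Fin ρ) ℝ := X₂ᵀ * Z with hSdef
  have hAsymm : Aᵀ = A := hA
  -- X₂ᵀ A X₁ = 0
  have hblock' : X₂ᵀ * (A * X₁) = 0 := by
    have h := congrArg Matrix.transpose hblock
    simpa [Matrix.transpose_mul, hAsymm, Matrix.mul_assoc] using h
  -- X₂ᵀ A = L₂ X₂ᵀ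
  have key : X₂ᵀ * A = L₂ * X₂ᵀ := by
    calc X₂ᵀ * A = X₂ᵀ * A * (X₁ * X₁ᵀ + X₂ * X₂ᵀ) := by rw [hcomplete, Matrix.mul_one]
    _ = X₂ᵀ * (A * X₁) * X₁ᵀ + (X₂ᵀ * A * X₂) * X₂ᵀ := by
        rw [Matrix.mul_add]; simp [Matrix.mul_assoc]
    _ = L₂ * X₂ᵀ := by rw [hblock', hL₂def]; simp
  -- residual identity
  have hres : X₂ᵀ * R = L₂ * S - S * M := by
    rw [hR, Matrix.mul_sub, hSdef, ← Matrix.mul_assoc, ← Matrix.mul_assoc, key, Matrix.mul_assoc]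
  -- hermitian structures
  have hMh : M.IsHermitian := by
    rw [Matrix.IsHermitian, Matrix.conjTranspose_eq_transpose_of_trivial]; exact hM
  have hLh : L₂.IsHermitian := by
    rw [Matrix.IsHermitian, Matrix.conjTranspose_eq_transpose_of_trivial, hL₂def]
    simp [Matrix.transpose_mul, hAsymm, Matrix.mul_assoc]
  set U : Matrix (Fin (n-ρ)) (Fin (n-ρ)) ℝ := ((hLh.eigenvectorUnitary : unitaryGroup (Fin (n-ρ)) ℝ) : Matrix (Fin (n-ρ)) (Fin (n-ρ)) ℝ) with hUdef
  set V : Matrix (Fin ρ) (Fin ρ) ℝ := ((hMh.eigenvectorUnitary : unitaryGroup (Fin ρ) ℝ) : Matrix (Fin ρ) (Fin ρ) ℝ) with hVdef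
  have hUstar : star U = Uᵀ := Matrix.conjTranspose_eq_transpose_of_trivial U
  have hVstar : star V = Vᵀ := Matrix.conjTranspose_eq_transpose_of_trivial V
  have hUU : Uᵀ * U = 1 := by
    rw [← hUstar]; exact Matrix.mem_unitaryGroup_iff'.mp hLh.eigenvectorUnitary.2
  have hUU' : U * Uᵀ = 1 := by
    rw [← hUstar]; exact Matrix.mem_unitaryGroup_iff.mp hLh.eigenvectorUnitary.2
  have hVV : Vᵀ * V = 1 := by
    rw [← hVstar]; exact Matrix.mem_unitaryGroup_iff'.mp hMh.eigenvectorUnitary.2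
  have hVV' : V * Vᵀ = 1 := by
    rw [← hVstar]; exact Matrix.mem_unitaryGroup_iff.mp hMh.eigenvectorUnitary.2
  set d := hLh.eigenvalues with hddef
  set e := hMh.eigenvalues with hedef
  have hLspec : L₂ = U * Matrix.diagonal d * Uᵀ := by
    have := hLh.spectral_theorem
    rwa [RCLike.ofReal_real_eq_id, Function.id_comp, Unitary.conjStarAlgAut_apply, hUstar] at this
  have hMspec' : M = V * Matrix.diagonal e * Vᵀ := by
    have := hMh.spectral_theorem
    rwa [RCLike.ofReal_real_eq_id, Function.id_comp, Unitary.conjStarAlgAut_apply, hVstar] at this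
  set T : Matrix (Fin (n-ρ)) (Fin ρ) ℝ := Uᵀ * S * V with hTdef
  -- factorization
  have hfac : U * (Matrix.diagonal d * T - T * Matrix.diagonal e) * Vᵀ = L₂ * S - S * M := by
    rw [Matrix.mul_sub, Matrix.sub_mul, hTdef]
    congr 1
    · calc U * (Matrix.diagonal d * (Uᵀ * S * V)) * Vᵀ
          = (U * Matrix.diagonal d * Uᵀ) * S * (V * Vᵀ) := by
            simp only [Matrix.mul_assoc]
      _ = L₂ * S := by rw [hVV', ← hLspec, Matrix.mul_one]
    · calc U * (Uᵀ * S * V * Matrix.diagonal e) * Vᵀ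
          = (U * Uᵀ) * S * (V * Matrix.diagonal e * Vᵀ) := by simp only [Matrix.mul_assoc]
      _ = S * M := by rw [hUU', ← hMspec', Matrix.one_mul]
  -- eigenvalue gap
  have hgap : ∀ i j, δ^2 ≤ (d i - e j)^2 := by
    intro i j
    have hdi : d i ∉ Set.Icc (α - δ) (β + δ) := hL₂spec _ (hLh.eigenvalues_mem_spectrum_real i)
    have hej : e j ∈ Set.Icc α β := hMspec (hMh.eigenvalues_mem_spectrum_real j)
    obtain ⟨h1, h2⟩ := hej
    rw [Set.mem_Icc, not_and_or, not_le, not_le] at hdi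
    rcases hdi with h | h
    · nlinarith
    · nlinarith
  -- entrywise bound
  have hDT : ∀ i j, (Matrix.diagonal d * T - T * Matrix.diagonal e) i j = (d i - e j) * T i j := by
    intro i j
    simp only [Matrix.sub_apply, Matrix.diagonal_mul, Matrix.mul_diagonal, sub_mul]
    ring
  have hlow : δ^2 * f2 T ≤ f2 (Matrix.diagonal d * T - T * Matrix.diagonal e) := by
    rw [f2, f2, Finset.mul_sum]
    apply Finset.sum_le_sum; intro i _
    rw [Finset.mul_sum]
    apply Finset.sum_le_sum; intro j _
    rw [hDT i j, mul_pow]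
    have := hgap i j
    nlinarith [sq_nonneg (T i j)]
  -- transfer through orthogonal factors
  have hf2T : f2 T = f2 S := by
    rw [hTdef, f2_mul_right _ _ hVV',
      f2_mul_left Uᵀ (by rw [Matrix.transpose_transpose]; exact hUU') S]
  have hf2res : f2 (L₂ * S - S * M) = f2 (Matrix.diagonal d * T - T * Matrix.diagonal e) := by
    rw [← hfac, f2_mul_right _ _ (by rw [Matrix.transpose_transpose]; exact hVV),
      f2_mul_left U hUU]
  -- ‖X₂ᵀ R‖² ≤ ‖R‖²
  have hproj : f2 (X₂ᵀ * R) ≤ f2 R := by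
    have hsplit : f2 R = f2 (X₁ᵀ * R) + f2 (X₂ᵀ * R) := by
      rw [f2_eq_trace, f2_eq_trace, f2_eq_trace]
      have : Rᵀ * R = Rᵀ * (X₁ * X₁ᵀ) * R + Rᵀ * (X₂ * X₂ᵀ) * R := by
        rw [← Matrix.add_mul, ← Matrix.mul_add, hcomplete, Matrix.mul_one]
      rw [this, Matrix.trace_add]
      congr 1 <;> simp [Matrix.transpose_mul, Matrix.mul_assoc]
    have := f2_nonneg (X₁ᵀ * R)
    linarith
  -- combine
  have hmain : δ^2 * f2 S ≤ f2 R := by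
    calc δ^2 * f2 S = δ^2 * f2 T := by rw [hf2T]
    _ ≤ f2 (Matrix.diagonal d * T - T * Matrix.diagonal e) := hlow
    _ = f2 (L₂ * S - S * M) := hf2res.symm
    _ = f2 (X₂ᵀ * R) := by rw [hres]
    _ ≤ f2 R := hproj
  rw [frobNorm_eq, frobNorm_eq]
  have h1 : f2 S ≤ f2 R / δ^2 := by
    rw [le_div_iff₀ (by positivity)]; linarith [hmain]
  calc Real.sqrt (f2 S) ≤ Real.sqrt (f2 R / δ^2) := Real.sqrt_le_sqrt h1
  _ = Real.sqrt (f2 R) / δ := by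
      rw [Real.sqrt_div (f2_nonneg R), Real.sqrt_sq hδ.le]
end

section
/- Let A be an n×n real symmetric matrix and let X₁ ∈ ℝ^{n×ρ} and X₂ ∈ ℝ^{n×(n−ρ)} be matrices such that the block matrix [X₁ X₂] is orthogonal and X₁ᵀAX₂ = 0 (so that, writing L₁ = X₁ᵀAX₁ and L₂ = X₂ᵀAX₂, the pair gives a spectral resolution [X₁ X₂]ᵀ A [X₁ X₂] = diag(L₁, L₂)). Let Z ∈ ℝ^{n×ρ} have orthonormal columns (ZᵀZ = I_ρ), let M be a ρ×ρ real symmetric matrix, and define the residual R = AZ − ZM. Suppose there exist reals α ≤ β and δ > 0 such that every eigenvalue of M lies in the interval [α, β] and every eigenvalue of L₂ lies in ℝ \ [α − δ, β + δ]. Then ‖X₂ᵀZ‖₂ ≤ ‖R‖₂ / δ. -/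
open Matrix

/-- The spectral norm (operator 2-norm, largest singular value) of a real matrix:
the supremum of the Euclidean norm of `M.mulVec x` over the Euclidean unit ball. -/
noncomputable def specNorm {m n : ℕ} (M : Matrix (Fin m) (Fin n) ℝ) : ℝ :=
  sSup {r : ℝ | ∃ x : Fin n → ℝ, (∑ i, (x i) ^ 2) ≤ 1 ∧
    r = Real.sqrt (∑ j, (M.mulVec x j) ^ 2)}

open Pointwise

namespace DKaux

noncomputable def clm {m n : ℕ} (B : Matrix (Fin m) (Fin n) ℝ) :
    EuclideanSpace ℝ (Fin n) →L[ℝ] EuclideanSpace ℝ (Fin m) :=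
  LinearMap.toContinuousLinearMap (Matrix.toEuclideanLin B)

lemma clm_apply {m n : ℕ} (B : Matrix (Fin m) (Fin n) ℝ) (x : EuclideanSpace ℝ (Fin n)) (j : Fin m) :
    clm B x j = B.mulVec (fun i => x i) j := rfl

lemma norm_euclid {m : ℕ} (y : EuclideanSpace ℝ (Fin m)) :
    ‖y‖ = Real.sqrt (∑ i, (y i)^2) := by
  rw [EuclideanSpace.norm_eq]
  congr 1
  exact Finset.sum_congr rfl fun i _ => by rw [Real.norm_eq_abs, sq_abs]

lemma clm_mul_apply {m n k : ℕ} (A : Matrix (Fin m) (Fin n) ℝ) (B : Matrix (Fin n) (Fin k) ℝ)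
    (x : EuclideanSpace ℝ (Fin k)) : clm (A * B) x = clm A (clm B x) := by
  ext j
  simp only [clm_apply, ← Matrix.mulVec_mulVec]

lemma clm_add_apply {m n : ℕ} (A B : Matrix (Fin m) (Fin n) ℝ) (x : EuclideanSpace ℝ (Fin n)) :
    clm (A + B) x = clm A x + clm B x := by
  simp only [clm, map_add, ContinuousLinearMap.add_apply]

lemma specNorm_eq {m n : ℕ} (B : Matrix (Fin m) (Fin n) ℝ) : specNorm B = ‖clm B‖ := by
  rw [← ContinuousLinearMap.sSup_unitClosedBall_eq_norm (clm B)]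
  apply congrArg sSup
  ext r
  constructor
  · rintro ⟨x, hx, rfl⟩
    refine ⟨(WithLp.equiv 2 (Fin n → ℝ)).symm x, ?_, ?_⟩
    · rw [Metric.mem_closedBall, dist_zero_right, norm_euclid]
      exact Real.sqrt_le_one.2 (by simpa using hx)
    · show ‖clm B ((WithLp.equiv 2 (Fin n → ℝ)).symm x)‖ = _
      rw [norm_euclid]
      rfl
  · rintro ⟨x, hx, rfl⟩
    refine ⟨fun i => x i, ?_, ?_⟩
    · rw [Metric.mem_closedBall, dist_zero_right, norm_euclid] at hx
      have h0 : (0:ℝ) ≤ ∑ i, (x i)^2 := Finset.sum_nonneg fun i _ => sq_nonneg _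
      nlinarith [Real.sq_sqrt h0, Real.sqrt_nonneg (∑ i, (x i)^2)]
    · show ‖clm B x‖ = _
      rw [norm_euclid]
      rfl

lemma repr_clm_apply {k : ℕ} (P : Matrix (Fin k) (Fin k) ℝ) (hP : P.IsHermitian)
    (x : EuclideanSpace ℝ (Fin k)) (i : Fin k) :
    hP.eigenvectorBasis.repr (clm P x) i = hP.eigenvalues i * hP.eigenvectorBasis.repr x i := by
  rw [OrthonormalBasis.repr_apply_apply, OrthonormalBasis.repr_apply_apply]
  have hsym := (Matrix.isHermitian_iff_isSymmetric.1 hP)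
  have h1 : (clm P x) = Matrix.toEuclideanLin P x := rfl
  rw [h1, ← hsym (hP.eigenvectorBasis i) x]
  have h2 : Matrix.toEuclideanLin P (hP.eigenvectorBasis i)
      = hP.eigenvalues i • hP.eigenvectorBasis i := by
    ext j
    exact congrFun (hP.mulVec_eigenvectorBasis i) j
  rw [h2, real_inner_smul_left]

lemma clm_herm_le {k : ℕ} (P : Matrix (Fin k) (Fin k) ℝ) (hP : P.IsHermitian) (r : ℝ)
    (hr0 : 0 ≤ r) (hr : ∀ i, |hP.eigenvalues i| ≤ r) (x : EuclideanSpace ℝ (Fin k)) :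
    ‖clm P x‖ ≤ r * ‖x‖ := by
  rw [← hP.eigenvectorBasis.repr.norm_map (clm P x), ← hP.eigenvectorBasis.repr.norm_map x,
    norm_euclid, norm_euclid, ← Real.sqrt_sq hr0, ← Real.sqrt_mul (sq_nonneg r)]
  apply Real.sqrt_le_sqrt
  rw [Finset.mul_sum]
  apply Finset.sum_le_sum
  intro i _
  rw [repr_clm_apply, mul_pow]
  have key : (hP.eigenvalues i)^2 ≤ r^2 := by
    have h := hr i
    have h2 := abs_nonneg (hP.eigenvalues i)
    nlinarith [sq_abs (hP.eigenvalues i)]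
  exact mul_le_mul_of_nonneg_right key (sq_nonneg _)

lemma clm_herm_ge {k : ℕ} (P : Matrix (Fin k) (Fin k) ℝ) (hP : P.IsHermitian) (s : ℝ)
    (hs0 : 0 ≤ s) (hs : ∀ i, s ≤ |hP.eigenvalues i|) (x : EuclideanSpace ℝ (Fin k)) :
    s * ‖x‖ ≤ ‖clm P x‖ := by
  rw [← hP.eigenvectorBasis.repr.norm_map (clm P x), ← hP.eigenvectorBasis.repr.norm_map x,
    norm_euclid, norm_euclid, ← Real.sqrt_sq hs0, ← Real.sqrt_mul (sq_nonneg s)]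
  apply Real.sqrt_le_sqrt
  rw [Finset.mul_sum]
  apply Finset.sum_le_sum
  intro i _
  rw [repr_clm_apply, mul_pow]
  have key : s^2 ≤ (hP.eigenvalues i)^2 := by
    have h := hs i
    nlinarith [sq_abs (hP.eigenvalues i)]
  exact mul_le_mul_of_nonneg_right key (sq_nonneg _)

lemma isHermitian_shift {k : ℕ} (P : Matrix (Fin k) (Fin k) ℝ) (h : P.IsSymm) (c : ℝ) :
    (P - c • (1 : Matrix (Fin k) (Fin k) ℝ)).IsHermitian := by
  rw [Matrix.IsHermitian, Matrix.conjTranspose_eq_transpose_of_trivial]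
  simp [Matrix.IsSymm, Matrix.transpose_sub, Matrix.transpose_smul, h.eq]

lemma eig_shift_mem {k : ℕ} (P : Matrix (Fin k) (Fin k) ℝ) (c : ℝ)
    (hP' : (P - c • (1 : Matrix (Fin k) (Fin k) ℝ)).IsHermitian) (i : Fin k) :
    hP'.eigenvalues i + c ∈ spectrum ℝ P := by
  have h1 := hP'.eigenvalues_mem_spectrum_real i
  have h3 : spectrum ℝ (P - c • (1 : Matrix (Fin k) (Fin k) ℝ)) = spectrum ℝ P - ({c} : Set ℝ) := by
    calc spectrum ℝ (P - c • (1 : Matrix (Fin k) (Fin k) ℝ))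
        = spectrum ℝ (P - algebraMap ℝ _ c) := by rw [Algebra.algebraMap_eq_smul_one]
      _ = spectrum ℝ P - ({c} : Set ℝ) := (spectrum.sub_singleton_eq P c).symm
  have h4 : hP'.eigenvalues i ∈ spectrum ℝ P - ({c} : Set ℝ) := by rw [← h3]; exact h1
  obtain ⟨μ, hμ, y, hy, hxy⟩ := Set.mem_sub.1 h4
  rw [Set.mem_singleton_iff] at hy
  have : μ = hP'.eigenvalues i + c := by rw [hy] at hxy; linarith
  rwa [this] at hμ

lemma dot_self_eq {k l : ℕ} (B : Matrix (Fin k) (Fin l) ℝ) (y : Fin k → ℝ) :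
    ∑ j, ((Bᵀ *ᵥ y) j)^2 = ((B * Bᵀ) *ᵥ y) ⬝ᵥ y := by
  have h : ∑ j, ((Bᵀ *ᵥ y) j)^2 = (Bᵀ *ᵥ y) ⬝ᵥ (Bᵀ *ᵥ y) := by
    simp [dotProduct, pow_two]
  rw [h, Matrix.dotProduct_mulVec, Matrix.vecMul_transpose, Matrix.mulVec_mulVec]

lemma sylvester {p q : ℕ} (L : Matrix (Fin p) (Fin p) ℝ) (hL : L.IsHermitian)
    (Mm : Matrix (Fin q) (Fin q) ℝ) (hMm : Mm.IsHermitian)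
    (S T : Matrix (Fin p) (Fin q) ℝ) (rr δ : ℝ) (hrr : 0 ≤ rr) (hδ : 0 < δ)
    (hLe : ∀ i, rr + δ ≤ |hL.eigenvalues i|) (hMe : ∀ i, |hMm.eigenvalues i| ≤ rr)
    (hkey : L * S = S * Mm + T) :
    δ * ‖clm S‖ ≤ ‖clm T‖ := by
  have hδrr : (0:ℝ) < rr + δ := by linarith
  have hb : ‖clm S‖ ≤ (rr * ‖clm S‖ + ‖clm T‖) / (rr + δ) := by
    apply ContinuousLinearMap.opNorm_le_bound
    · positivity
    intro x
    rw [div_mul_eq_mul_div, le_div_iff₀ hδrr]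
    calc ‖clm S x‖ * (rr + δ) = (rr + δ) * ‖clm S x‖ := mul_comm _ _
      _ ≤ ‖clm L (clm S x)‖ := clm_herm_ge L hL _ (le_of_lt hδrr) hLe _
      _ = ‖clm (L * S) x‖ := by rw [clm_mul_apply]
      _ = ‖clm (S * Mm) x + clm T x‖ := by rw [hkey, clm_add_apply]
      _ ≤ ‖clm (S * Mm) x‖ + ‖clm T x‖ := norm_add_le _ _
      _ ≤ ‖clm S‖ * ‖clm Mm x‖ + ‖clm T‖ * ‖x‖ :=
          add_le_add (by rw [clm_mul_apply]; exact (clm S).le_opNorm _) ((clm T).le_opNorm x)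
      _ ≤ ‖clm S‖ * (rr * ‖x‖) + ‖clm T‖ * ‖x‖ :=
          add_le_add (mul_le_mul_of_nonneg_left (clm_herm_le Mm hMm rr hrr hMe x)
            (norm_nonneg _)) le_rfl
      _ = (rr * ‖clm S‖ + ‖clm T‖) * ‖x‖ := by ring
  have h2 := (le_div_iff₀ hδrr).1 hb
  linarith

end DKaux

open DKaux

/-- Davis–Kahan sinΘ theorem, spectral-norm case. -/
theorem davis_kahan_sin_theta_spectral
    (n ρ : ℕ)
    (A : Matrix (Fin n) (Fin n) ℝ) (hA : A.IsSymm)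
    (X₁ : Matrix (Fin n) (Fin ρ) ℝ) (X₂ : Matrix (Fin n) (Fin (n - ρ)) ℝ)
    (hX₁ : X₁ᵀ * X₁ = 1) (hX₂ : X₂ᵀ * X₂ = 1) (hX₁₂ : X₁ᵀ * X₂ = 0)
    (hcomplete : X₁ * X₁ᵀ + X₂ * X₂ᵀ = 1)
    (hblock : X₁ᵀ * A * X₂ = 0)
    (Z : Matrix (Fin n) (Fin ρ) ℝ) (hZ : Zᵀ * Z = 1)
    (M : Matrix (Fin ρ) (Fin ρ) ℝ) (hM : M.IsSymm)
    (R : Matrix (Fin n) (Fin ρ) ℝ) (hR : R = A * Z - Z * M)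
    (α β δ : ℝ) (hαβ : α ≤ β) (hδ : 0 < δ)
    (hMspec : spectrum ℝ M ⊆ Set.Icc α β)
    (hL₂spec : ∀ μ ∈ spectrum ℝ (X₂ᵀ * A * X₂), μ ∉ Set.Icc (α - δ) (β + δ)) :
    specNorm (X₂ᵀ * Z) ≤ specNorm R / δ := by
  classical
  have hc : ((α + β)/2 : ℝ) = (α + β)/2 := rfl
  have hrr0 : (0:ℝ) ≤ (β - α)/2 := by linarith
  have hMsymm' : (M - ((α + β)/2) • (1 : Matrix (Fin ρ) (Fin ρ) ℝ)).IsHermitian :=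
    isHermitian_shift M hM _
  have hL₂symm : (X₂ᵀ * A * X₂).IsSymm := by
    have h1 : (X₂ᵀ * A * X₂)ᵀ = X₂ᵀ * Aᵀ * X₂ := by
      rw [Matrix.transpose_mul, Matrix.transpose_mul, Matrix.transpose_transpose,
        ← Matrix.mul_assoc]
    rw [Matrix.IsSymm, h1, hA.eq]
  have hL₂h' : (X₂ᵀ * A * X₂ - ((α + β)/2) • (1 : Matrix (Fin (n-ρ)) (Fin (n-ρ)) ℝ)).IsHermitian :=
    isHermitian_shift _ hL₂symm _
  have hMeig : ∀ i, |hMsymm'.eigenvalues i| ≤ (β - α)/2 := by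
    intro i
    have h := eig_shift_mem M ((α + β)/2) hMsymm' i
    have h2 := hMspec h
    rw [Set.mem_Icc] at h2
    rw [abs_le]
    exact ⟨by linarith [h2.1], by linarith [h2.2]⟩
  have hLeig : ∀ i, (β - α)/2 + δ ≤ |hL₂h'.eigenvalues i| := by
    intro i
    have h := eig_shift_mem (X₂ᵀ * A * X₂) ((α + β)/2) hL₂h' i
    have h2 := hL₂spec _ h
    rw [Set.mem_Icc, not_and_or, not_le, not_le] at h2
    rw [le_abs]
    rcases h2 with h2 | h2
    · right; linarith
    · left; linarith
  have hAX₁ : X₂ᵀ * A * X₁ = 0 := by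
    have h := congrArg Matrix.transpose hblock
    simp only [Matrix.transpose_mul, Matrix.transpose_transpose, Matrix.transpose_zero] at h
    rw [hA.eq] at h
    rw [Matrix.mul_assoc]
    exact h
  have hcomm : X₂ᵀ * A = (X₂ᵀ * A * X₂) * X₂ᵀ := by
    calc X₂ᵀ * A = X₂ᵀ * A * (X₁ * X₁ᵀ + X₂ * X₂ᵀ) := by rw [hcomplete, Matrix.mul_one]
      _ = (X₂ᵀ * A * X₁) * X₁ᵀ + (X₂ᵀ * A * X₂) * X₂ᵀ := by
          rw [Matrix.mul_add, ← Matrix.mul_assoc, ← Matrix.mul_assoc]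
      _ = (X₂ᵀ * A * X₂) * X₂ᵀ := by rw [hAX₁, Matrix.zero_mul, zero_add]
  have hT' : X₂ᵀ * R = (X₂ᵀ * A * X₂) * (X₂ᵀ * Z) - (X₂ᵀ * Z) * M := by
    rw [hR, Matrix.mul_sub, ← Matrix.mul_assoc, ← Matrix.mul_assoc,
      ← Matrix.mul_assoc (X₂ᵀ * A * X₂) X₂ᵀ Z, ← hcomm]
  have key : (X₂ᵀ * A * X₂ - ((α + β)/2) • 1) * (X₂ᵀ * Z)
      = (X₂ᵀ * Z) * (M - ((α + β)/2) • 1) + X₂ᵀ * R := by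
    rw [hT', Matrix.sub_mul, Matrix.mul_sub, Matrix.smul_mul, Matrix.mul_smul,
      Matrix.one_mul, Matrix.mul_one]
    abel
  have hfinal := sylvester _ hL₂h' _ hMsymm' (X₂ᵀ * Z) (X₂ᵀ * R) ((β - α)/2) δ hrr0 hδ
    hLeig hMeig key
  have hX2v : ∀ y : EuclideanSpace ℝ (Fin n), ‖clm X₂ᵀ y‖ ≤ ‖y‖ := by
    intro y
    rw [norm_euclid, norm_euclid]
    apply Real.sqrt_le_sqrt
    have h1 : ∑ j, ((clm X₂ᵀ y) j)^2 = ((X₂ * X₂ᵀ) *ᵥ (fun i => y i)) ⬝ᵥ (fun i => y i) :=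
      dot_self_eq X₂ (fun i => y i)
    have h2 : X₂ * X₂ᵀ = 1 - X₁ * X₁ᵀ := eq_sub_of_add_eq' hcomplete
    have h3 : (0:ℝ) ≤ ((X₁ * X₁ᵀ) *ᵥ (fun i => y i)) ⬝ᵥ (fun i => y i) := by
      rw [← dot_self_eq X₁ (fun i => y i)]
      exact Finset.sum_nonneg fun j _ => sq_nonneg _
    have h4 : (fun i => y i) ⬝ᵥ (fun i => y i) = ∑ i, (y i)^2 := by
      simp [dotProduct, pow_two]
    rw [h2, Matrix.sub_mulVec, sub_dotProduct, Matrix.one_mulVec, h4] at h1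
    have h5 : ∑ j, ((clm X₂ᵀ y) j)^2 = ∑ j, (y j)^2
        - ((X₁ * X₁ᵀ) *ᵥ (fun i => y i)) ⬝ᵥ (fun i => y i) := h1
    linarith
  have hTR : ‖clm (X₂ᵀ * R)‖ ≤ ‖clm R‖ := by
    apply ContinuousLinearMap.opNorm_le_bound _ (norm_nonneg _)
    intro x
    rw [clm_mul_apply]
    calc ‖clm X₂ᵀ (clm R x)‖ ≤ ‖clm R x‖ := hX2v _
      _ ≤ ‖clm R‖ * ‖x‖ := (clm R).le_opNorm x
  rw [specNorm_eq, specNorm_eq, le_div_iff₀ hδ]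
  calc ‖clm (X₂ᵀ * Z)‖ * δ = δ * ‖clm (X₂ᵀ * Z)‖ := mul_comm _ _
    _ ≤ ‖clm (X₂ᵀ * R)‖ := hfinal
    _ ≤ ‖clm R‖ := hTR
end

section
/- Let A and E be n×n real symmetric matrices and set Ã = A + E. Let λ₁ ≤ λ₂ ≤ ⋯ ≤ λₙ be the eigenvalues of A with a corresponding orthonormal basis of eigenvectors u₁, …, uₙ, and let λ̃₁ ≤ ⋯ ≤ λ̃ₙ be the eigenvalues of Ã with orthonormal eigenvectors ũ₁, …, ũₙ. Fix 1 ≤ ρ < n and assume λ̃_{ρ+1} > λ_ρ. Let U₁ = [u₁ ⋯ u_ρ] and Ũ₂ = [ũ_{ρ+1} ⋯ ũₙ]. Let μ₁ ≥ μ₂ ≥ ⋯ ≥ μₙ be the eigenvalues of EᵀE listed in decreasing order. Then ‖Ũ₂ᵀU₁‖_F ≤ √(μ₁ + μ₂ + ⋯ + μ_ρ) / (λ̃_{ρ+1} − λ_ρ). -/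
open Matrix

namespace PertLemma

variable {n : ℕ}

lemma gram_one (b : Fin n → Fin n → ℝ)
    (hb : ∀ i j, ∑ x, b i x * b j x = if i = j then (1 : ℝ) else 0) :
    (Matrix.of b) * (Matrix.of b)ᵀ = 1 := by
  ext i j
  simp [Matrix.mul_apply, Matrix.one_apply, hb i j]

lemma gram_one' (b : Fin n → Fin n → ℝ)
    (hb : ∀ i j, ∑ x, b i x * b j x = if i = j then (1 : ℝ) else 0) :
    (Matrix.of b)ᵀ * (Matrix.of b) = 1 :=
  mul_eq_one_comm.mp (gram_one b hb)

lemma parseval (b : Fin n → Fin n → ℝ)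
    (hb : ∀ i j, ∑ x, b i x * b j x = if i = j then (1 : ℝ) else 0)
    (v : Fin n → ℝ) :
    ∑ j, (b j ⬝ᵥ v) ^ 2 = v ⬝ᵥ v := by
  have h1 : (Matrix.of b)ᵀ * (Matrix.of b) = 1 := gram_one' b hb
  have key : ((Matrix.of b).mulVec v) ⬝ᵥ ((Matrix.of b).mulVec v) = v ⬝ᵥ v := by
    rw [Matrix.dotProduct_mulVec, ← Matrix.mulVec_transpose,
      Matrix.mulVec_mulVec, h1, Matrix.one_mulVec]
  calc ∑ j, (b j ⬝ᵥ v) ^ 2 = ((Matrix.of b).mulVec v) ⬝ᵥ ((Matrix.of b).mulVec v) := by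
        simp [dotProduct, Matrix.mulVec, sq]
    _ = v ⬝ᵥ v := key

lemma expansion (b : Fin n → Fin n → ℝ)
    (hb : ∀ i j, ∑ x, b i x * b j x = if i = j then (1 : ℝ) else 0)
    (v : Fin n → ℝ) (x : Fin n) :
    v x = ∑ j, (b j ⬝ᵥ v) * b j x := by
  have h1 : (Matrix.of b)ᵀ * (Matrix.of b) = 1 := gram_one' b hb
  have h2 : ∀ y, ∑ j, b j x * b j y = if x = y then (1:ℝ) else 0 := by
    intro y
    have := congrFun (congrFun h1 x) y
    simpa [Matrix.mul_apply, Matrix.one_apply] using this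
  calc v x = ∑ y, (if x = y then (1:ℝ) else 0) * v y := by simp
    _ = ∑ y, (∑ j, b j x * b j y) * v y := by
        refine Finset.sum_congr rfl fun y _ => by rw [h2 y]
    _ = ∑ y, ∑ j, b j x * b j y * v y := by
        refine Finset.sum_congr rfl fun y _ => by rw [Finset.sum_mul]
    _ = ∑ j, ∑ y, b j x * b j y * v y := Finset.sum_comm
    _ = ∑ j, (b j ⬝ᵥ v) * b j x := by
        refine Finset.sum_congr rfl fun j _ => ?_
        simp only [dotProduct]
        rw [Finset.sum_mul]
        exact Finset.sum_congr rfl fun y _ => by ring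

lemma quadform (M : Matrix (Fin n) (Fin n) ℝ) (μ : Fin n → ℝ) (w : Fin n → Fin n → ℝ)
    (hw : ∀ i j, ∑ x, w i x * w j x = if i = j then (1 : ℝ) else 0)
    (hweig : ∀ j, M.mulVec (w j) = μ j • w j)
    (v : Fin n → ℝ) :
    v ⬝ᵥ M.mulVec v = ∑ k, μ k * (w k ⬝ᵥ v) ^ 2 := by
  have hv : ∀ y, v y = ∑ k, (w k ⬝ᵥ v) * w k y := expansion w hw v
  have hMv : ∀ x, (M.mulVec v) x = ∑ k, (w k ⬝ᵥ v) * (μ k * w k x) := by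
    intro x
    calc (M.mulVec v) x = ∑ y, M x y * v y := rfl
      _ = ∑ y, M x y * ∑ k, (w k ⬝ᵥ v) * w k y := by
          refine Finset.sum_congr rfl fun y _ => by rw [← hv y]
      _ = ∑ y, ∑ k, (w k ⬝ᵥ v) * (M x y * w k y) := by
          refine Finset.sum_congr rfl fun y _ => by
            rw [Finset.mul_sum]; exact Finset.sum_congr rfl fun k _ => by ring
      _ = ∑ k, ∑ y, (w k ⬝ᵥ v) * (M x y * w k y) := Finset.sum_comm
      _ = ∑ k, (w k ⬝ᵥ v) * (μ k * w k x) := by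
          refine Finset.sum_congr rfl fun k _ => ?_
          rw [← Finset.mul_sum]
          congr 1
          have := congrFun (hweig k) x
          simpa [Matrix.mulVec, dotProduct] using this
  calc v ⬝ᵥ M.mulVec v = ∑ x, v x * (M.mulVec v) x := rfl
    _ = ∑ x, ∑ k, (w k ⬝ᵥ v) * (μ k * (w k x * v x)) := by
        refine Finset.sum_congr rfl fun x _ => by
          rw [hMv x, Finset.mul_sum]
          exact Finset.sum_congr rfl fun k _ => by ring
    _ = ∑ k, ∑ x, (w k ⬝ᵥ v) * (μ k * (w k x * v x)) := Finset.sum_comm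
    _ = ∑ k, μ k * (w k ⬝ᵥ v) ^ 2 := by
        refine Finset.sum_congr rfl fun k _ => ?_
        simp only [← Finset.mul_sum]
        simp only [dotProduct, sq]
        ring

lemma dot_symm_mulVec (M : Matrix (Fin n) (Fin n) ℝ) (hM : M.IsSymm)
    (v w : Fin n → ℝ) : v ⬝ᵥ M.mulVec w = (M.mulVec v) ⬝ᵥ w := by
  rw [Matrix.dotProduct_mulVec, ← Matrix.mulVec_transpose, hM.eq]

lemma dot_EE (E : Matrix (Fin n) (Fin n) ℝ) (v : Fin n → ℝ) :
    (E.mulVec v) ⬝ᵥ (E.mulVec v) = v ⬝ᵥ (Eᵀ * E).mulVec v := by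
  rw [Matrix.dotProduct_mulVec, ← Matrix.mulVec_transpose, Matrix.mulVec_mulVec,
    dotProduct_comm]

end PertLemma

/-- Frobenius-norm claim of the perturbation lemma (Lemma 3 of the paper). -/
theorem perturbation_lemma_frobenius
    (n ρ : ℕ) (hρ1 : 1 ≤ ρ) (hρn : ρ < n)
    (A E : Matrix (Fin n) (Fin n) ℝ) (hA : A.IsSymm) (hE : E.IsSymm)
    -- eigenvalues and orthonormal eigenvectors of A, in increasing order
    (lam : Fin n → ℝ) (u : Fin n → Fin n → ℝ)
    (hlamMono : Monotone lam)
    (huOrtho : ∀ i j, ∑ x, u i x * u j x = if i = j then (1 : ℝ) else 0)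
    (huEig : ∀ j, A.mulVec (u j) = lam j • u j)
    -- eigenvalues and orthonormal eigenvectors of Ã = A + E, in increasing order
    (tlam : Fin n → ℝ) (tu : Fin n → Fin n → ℝ)
    (htlamMono : Monotone tlam)
    (htuOrtho : ∀ i j, ∑ x, tu i x * tu j x = if i = j then (1 : ℝ) else 0)
    (htuEig : ∀ j, (A + E).mulVec (tu j) = tlam j • tu j)
    -- eigenvalues of EᵀE in decreasing order, with orthonormal eigenvectors
    (μ : Fin n → ℝ) (w : Fin n → Fin n → ℝ)
    (hμAnti : Antitone μ)
    (hwOrtho : ∀ i j, ∑ x, w i x * w j x = if i = j then (1 : ℝ) else 0)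
    (hwEig : ∀ j, (Eᵀ * E).mulVec (w j) = μ j • w j)
    -- eigengap assumption: λ̃_{ρ+1} > λ_ρ  (1-indexed; 0-indexed below)
    (hgap : lam ⟨ρ - 1, by omega⟩ < tlam ⟨ρ, hρn⟩)
    -- U₁ = [u₁ ⋯ u_ρ] and Ũ₂ = [ũ_{ρ+1} ⋯ ũ_n]
    (U₁ : Matrix (Fin n) (Fin ρ) ℝ)
    (hU₁ : ∀ x j, U₁ x j = u (Fin.castLE hρn.le j) x)
    (tU₂ : Matrix (Fin n) (Fin (n - ρ)) ℝ)
    (htU₂ : ∀ (x : Fin n) (j : Fin (n - ρ)), tU₂ x j = tu ⟨ρ + j.1, by omega⟩ x) :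
    frobNorm (tU₂ᵀ * U₁) ≤
      Real.sqrt (∑ j : Fin ρ, μ (Fin.castLE hρn.le j)) /
        (tlam ⟨ρ, hρn⟩ - lam ⟨ρ - 1, by omega⟩) := by
  classical
  open PertLemma in
  -- notation
  set p : Fin n := ⟨ρ - 1, by omega⟩ with hp
  set q : Fin n := ⟨ρ, hρn⟩ with hq
  set δ : ℝ := tlam q - lam p with hδdef
  have hδ : 0 < δ := sub_pos.mpr hgap
  -- embedding of Fin (n-ρ) into Fin n
  have hemb : ∀ i : Fin (n - ρ), ρ + i.1 < n := fun i => by omega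
  set e : Fin (n - ρ) → Fin n := fun i => ⟨ρ + i.1, hemb i⟩ with he
  have heinj : Function.Injective e := by
    intro a b h
    simp only [he, Fin.mk.injEq] at h
    exact Fin.ext (by omega)
  set c : Fin ρ → Fin n := fun j => Fin.castLE hρn.le j with hc
  -- entries of the matrix
  have hentry : ∀ (i : Fin (n - ρ)) (j : Fin ρ),
      (tU₂ᵀ * U₁) i j = tu (e i) ⬝ᵥ u (c j) := by
    intro i j
    simp only [Matrix.mul_apply, Matrix.transpose_apply, dotProduct]
    exact Finset.sum_congr rfl fun x _ => by rw [htU₂ x i, hU₁ x j]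
  -- key identity
  have hkey : ∀ (k : Fin n) (j : Fin n),
      tu k ⬝ᵥ E.mulVec (u j) = (tlam k - lam j) * (tu k ⬝ᵥ u j) := by
    intro k j
    have h1 : tu k ⬝ᵥ (A + E).mulVec (u j) = tlam k * (tu k ⬝ᵥ u j) := by
      rw [dot_symm_mulVec (A + E) (hA.add hE) (tu k) (u j), htuEig k]
      simp [dotProduct, Finset.sum_mul, Finset.mul_sum, mul_assoc]
    have h2 : tu k ⬝ᵥ A.mulVec (u j) = lam j * (tu k ⬝ᵥ u j) := by
      rw [huEig j]
      simp [dotProduct, Finset.mul_sum]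
      exact Finset.sum_congr rfl fun y _ => by ring
    have h3 : tu k ⬝ᵥ (A + E).mulVec (u j)
        = tu k ⬝ᵥ A.mulVec (u j) + tu k ⬝ᵥ E.mulVec (u j) := by
      rw [Matrix.add_mulVec, dotProduct_add]
    have := h3
    rw [h1, h2] at this
    linarith
    -- the embedding of the leading block
  have hcinj : Function.Injective c := fun a b h => by
    simpa [hc, Fin.ext_iff] using h
  -- sum over an injection is at most the full sum, for nonneg summands
  have hsub : ∀ f : Fin n → ℝ, (∀ k, 0 ≤ f k) →
      ∑ i : Fin (n - ρ), f (e i) ≤ ∑ k : Fin n, f k := by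
    intro f hf
    have h := Finset.sum_le_sum_of_subset_of_nonneg
      (Finset.subset_univ ((Finset.univ : Finset (Fin (n - ρ))).image e))
      (fun k _ _ => hf k)
    rwa [Finset.sum_image (fun a _ b _ h => heinj h)] at h
  have hsubρ : ∀ f : Fin n → ℝ, (∀ k, 0 ≤ f k) →
      ∑ j : Fin ρ, f (c j) ≤ ∑ k : Fin n, f k := by
    intro f hf
    have h := Finset.sum_le_sum_of_subset_of_nonneg
      (Finset.subset_univ ((Finset.univ : Finset (Fin ρ)).image c))
      (fun k _ _ => hf k)
    rwa [Finset.sum_image (fun a _ b _ h => hcinj h)] at h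
  -- d k : mass of w_k on the leading eigenspace of A
  set d : Fin n → ℝ := fun k => ∑ j : Fin ρ, (w k ⬝ᵥ u (c j)) ^ 2 with hd
  have hd_nonneg : ∀ k, 0 ≤ d k := fun k =>
    Finset.sum_nonneg fun j _ => sq_nonneg _
  have hd_le_one : ∀ k, d k ≤ 1 := by
    intro k
    have h1 : d k ≤ ∑ x : Fin n, (w k ⬝ᵥ u x) ^ 2 :=
      hsubρ (fun x => (w k ⬝ᵥ u x) ^ 2) (fun x => sq_nonneg _)
    have h2 : ∑ x : Fin n, (w k ⬝ᵥ u x) ^ 2 = 1 := by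
      have h3 : ∀ x : Fin n, (w k ⬝ᵥ u x) ^ 2 = (u x ⬝ᵥ w k) ^ 2 := fun x => by
        rw [dotProduct_comm]
      calc ∑ x : Fin n, (w k ⬝ᵥ u x) ^ 2 = ∑ x : Fin n, (u x ⬝ᵥ w k) ^ 2 :=
            Finset.sum_congr rfl fun x _ => h3 x
        _ = w k ⬝ᵥ w k := PertLemma.parseval u huOrtho (w k)
        _ = 1 := by simpa [dotProduct] using hwOrtho k k
    linarith
  -- Ky Fan step
  set t : ℝ := μ p with ht
  have hkyfan : ∑ k : Fin n, μ k * d k ≤ ∑ j : Fin ρ, μ (c j) := by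
    have hperk : ∀ k : Fin n, (μ k - t) * d k ≤
        (if (k : ℕ) < ρ then μ k - t else 0) := by
      intro k
      by_cases hk : (k : ℕ) < ρ
      · rw [if_pos hk]
        have hkp : k ≤ p := by
          simp only [hp, Fin.le_def]; omega
        have : t ≤ μ k := hμAnti hkp
        have := mul_le_of_le_one_right (sub_nonneg.mpr this) (hd_le_one k)
        linarith
      · rw [if_neg hk]
        have hpk : p ≤ k := by
          simp only [hp, Fin.le_def]; omega
        have : μ k ≤ t := hμAnti hpk
        exact mul_nonpos_of_nonpos_of_nonneg (by linarith) (hd_nonneg k)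
    have himg : ∀ k : Fin n, k ∈ (Finset.univ : Finset (Fin ρ)).image c ↔ (k : ℕ) < ρ := by
      intro k
      simp only [Finset.mem_image, Finset.mem_univ, true_and, hc]
      constructor
      · rintro ⟨j, rfl⟩; exact j.isLt
      · intro hk; exact ⟨⟨(k : ℕ), hk⟩, Fin.ext rfl⟩
    have hif : ∑ k : Fin n, (if (k : ℕ) < ρ then μ k - t else 0)
        = ∑ j : Fin ρ, (μ (c j) - t) := by
      have h1 : ∑ k ∈ (Finset.univ : Finset (Fin ρ)).image c,
          (if (k : ℕ) < ρ then μ k - t else 0)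
          = ∑ k : Fin n, (if (k : ℕ) < ρ then μ k - t else 0) :=
        Finset.sum_subset (Finset.subset_univ _)
          (fun k _ hk => if_neg (by simpa [himg k] using hk))
      rw [← h1, Finset.sum_image (fun a _ b _ h => hcinj h)]
      refine Finset.sum_congr rfl fun j _ => if_pos ?_
      simpa [hc] using j.isLt
    have hsumd : ∑ k : Fin n, d k = (ρ : ℝ) := by
      calc ∑ k : Fin n, d k
          = ∑ j : Fin ρ, ∑ k : Fin n, (w k ⬝ᵥ u (c j)) ^ 2 := Finset.sum_comm
        _ = ∑ j : Fin ρ, (1 : ℝ) := by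
            refine Finset.sum_congr rfl fun j _ => ?_
            rw [PertLemma.parseval w hwOrtho (u (c j))]
            simpa [dotProduct] using huOrtho (c j) (c j)
        _ = (ρ : ℝ) := by simp
    have h4 : ∑ k : Fin n, μ k * d k
        = ∑ k : Fin n, (μ k - t) * d k + t * (ρ : ℝ) := by
      rw [← hsumd, Finset.mul_sum, ← Finset.sum_add_distrib]
      exact Finset.sum_congr rfl fun k _ => by ring
    have h5 : ∑ k : Fin n, (μ k - t) * d k ≤ ∑ j : Fin ρ, (μ (c j) - t) := by
      rw [← hif]; exact Finset.sum_le_sum fun k _ => hperk k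
    have h6 : ∑ j : Fin ρ, (μ (c j) - t) = (∑ j : Fin ρ, μ (c j)) - (ρ : ℝ) * t := by
      rw [Finset.sum_sub_distrib]; simp [mul_comm]
    rw [h4]
    rw [h6] at h5
    linarith
  -- per-entry bound
  have hterm : ∀ (i : Fin (n - ρ)) (j : Fin ρ),
      (tu (e i) ⬝ᵥ u (c j)) ^ 2 * δ ^ 2 ≤ (tu (e i) ⬝ᵥ E.mulVec (u (c j))) ^ 2 := by
    intro i j
    rw [hkey (e i) (c j)]
    have h1 : tlam q ≤ tlam (e i) := htlamMono (by simp [hq, he, Fin.le_def])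
    have h2 : lam (c j) ≤ lam p := hlamMono (by
      simp only [hp, hc, Fin.le_def, Fin.coe_castLE]
      have := j.isLt; omega)
    have hΔ : δ ≤ tlam (e i) - lam (c j) := by rw [hδdef]; linarith
    have hδ2 : δ ^ 2 ≤ (tlam (e i) - lam (c j)) ^ 2 := by nlinarith
    have := mul_le_mul_of_nonneg_left hδ2 (sq_nonneg (tu (e i) ⬝ᵥ u (c j)))
    nlinarith [sq_nonneg (tu (e i) ⬝ᵥ u (c j))]
  -- the main Frobenius bound, squared
  set S : ℝ := ∑ i : Fin (n - ρ), ∑ j : Fin ρ, (tu (e i) ⬝ᵥ u (c j)) ^ 2 with hS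
  have hS_nonneg : 0 ≤ S :=
    Finset.sum_nonneg fun i _ => Finset.sum_nonneg fun j _ => sq_nonneg _
  have hbig : S * δ ^ 2 ≤ ∑ j : Fin ρ, μ (c j) := by
    calc S * δ ^ 2
        = ∑ i : Fin (n - ρ), ∑ j : Fin ρ, (tu (e i) ⬝ᵥ u (c j)) ^ 2 * δ ^ 2 := by
          rw [hS, Finset.sum_mul]
          exact Finset.sum_congr rfl fun i _ => by rw [Finset.sum_mul]
      _ ≤ ∑ i : Fin (n - ρ), ∑ j : Fin ρ, (tu (e i) ⬝ᵥ E.mulVec (u (c j))) ^ 2 :=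
          Finset.sum_le_sum fun i _ => Finset.sum_le_sum fun j _ => hterm i j
      _ = ∑ j : Fin ρ, ∑ i : Fin (n - ρ), (tu (e i) ⬝ᵥ E.mulVec (u (c j))) ^ 2 :=
          Finset.sum_comm
      _ ≤ ∑ j : Fin ρ, ∑ k : Fin n, (tu k ⬝ᵥ E.mulVec (u (c j))) ^ 2 :=
          Finset.sum_le_sum fun j _ =>
            hsub (fun k => (tu k ⬝ᵥ E.mulVec (u (c j))) ^ 2) (fun k => sq_nonneg _)
      _ = ∑ j : Fin ρ, ∑ k : Fin n, μ k * (w k ⬝ᵥ u (c j)) ^ 2 := by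
          refine Finset.sum_congr rfl fun j _ => ?_
          rw [PertLemma.parseval tu htuOrtho (E.mulVec (u (c j))), PertLemma.dot_EE,
            PertLemma.quadform (Eᵀ * E) μ w hwOrtho hwEig (u (c j))]
      _ = ∑ k : Fin n, μ k * d k := by
          rw [Finset.sum_comm]
          exact Finset.sum_congr rfl fun k _ => by rw [hd, Finset.mul_sum]
      _ ≤ ∑ j : Fin ρ, μ (c j) := hkyfan
  -- conclude
  have hμsum_nonneg : 0 ≤ ∑ j : Fin ρ, μ (c j) :=
    le_trans (mul_nonneg hS_nonneg (sq_nonneg δ)) hbig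
  have hfrob : frobNorm (tU₂ᵀ * U₁) = Real.sqrt S := by
    rw [frobNorm, hS]
    congr 1
    exact Finset.sum_congr rfl fun i _ => Finset.sum_congr rfl fun j _ => by
      rw [hentry i j]
  rw [hfrob]
  have hSle : S ≤ (∑ j : Fin ρ, μ (c j)) / δ ^ 2 := by
    rw [le_div_iff₀ (by positivity)]
    exact hbig
  calc Real.sqrt S ≤ Real.sqrt ((∑ j : Fin ρ, μ (c j)) / δ ^ 2) :=
        Real.sqrt_le_sqrt hSle
    _ = Real.sqrt (∑ j : Fin ρ, μ (c j)) / δ := by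
        rw [Real.sqrt_div hμsum_nonneg, Real.sqrt_sq hδ.le]
end
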